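/- Let Z₁,…,Zₙ be i.i.d. Lap(b) random variables with sum Z, and let γ ∈ (2/eⁿ, 1). Then with probability at least 1 − γ, |Z| < 2√2·b·√n·log(2/γ). -/

import Mathlib

open MeasureTheory ProbabilityTheory

/-- The Laplace distribution with scale `b`: the measure on `ℝ` with density
`x ↦ (1/(2b)) · exp(-|x|/b)` with respect to Lebesgue measure. -/
noncomputable def lap (b : ℝ) : Measure ℝ :=
  volume.withDensity (fun x => ENNReal.ofReal ((1 / (2 * b)) * Real.exp (-|x| / b)))

section aux

open Set

lemma exp_mul_integrableOn_Ioi {c : ℝ} (hc : 0 < c) :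
    IntegrableOn (fun x => Real.exp (-(c * x))) (Ioi (0:ℝ)) := by
  simpa [neg_mul] using exp_neg_integrableOn_Ioi 0 hc

lemma integral_exp_mul_Ioi' {c : ℝ} (hc : 0 < c) :
    ∫ x in Ioi (0:ℝ), Real.exp (-(c * x)) = c⁻¹ := by
  have h := integral_comp_mul_left_Ioi (fun x => Real.exp (-x)) 0 hc
  simp only [mul_zero, smul_eq_mul] at h
  rw [h, integral_exp_neg_Ioi_zero, mul_one]

lemma exp_mul_integrableOn_Iic {c : ℝ} (hc : 0 < c) :
    IntegrableOn (fun x => Real.exp (c * x)) (Iic (0:ℝ)) := by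
  have A : MeasurableEmbedding fun x : ℝ => -x :=
    (Homeomorph.neg ℝ).measurableEmbedding
  have hIic : IntegrableOn (fun x => Real.exp (c * x)) (Iic (0:ℝ))
      (Measure.map (fun x : ℝ => -x) volume) := by
    rw [A.integrableOn_map_iff]
    have hpre : ((fun x : ℝ => -x) ⁻¹' Iic 0) = Ici 0 := by
      ext x; simp
    rw [hpre, integrableOn_Ici_iff_integrableOn_Ioi]
    have := exp_mul_integrableOn_Ioi hc
    refine this.congr_fun (fun x _ => ?_) measurableSet_Ioi
    simp [Function.comp, mul_neg, neg_mul]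
  rwa [Measure.map_neg_eq_self (volume : Measure ℝ)] at hIic

lemma integral_exp_mul_Iic' {c : ℝ} (hc : 0 < c) :
    ∫ x in Iic (0:ℝ), Real.exp (c * x) = c⁻¹ := by
  have h := integral_comp_neg_Iic (0:ℝ) (fun x => Real.exp (-(c * x)))
  simp only [mul_neg, neg_neg, neg_zero] at h
  rw [h, integral_exp_mul_Ioi' hc]

lemma lap_dens_integrable {b s : ℝ} (hb : 0 < b) (hs : |s| < 1 / b) :
    Integrable (fun x => 1 / (2 * b) * Real.exp (-|x| / b) * Real.exp (s * x)) := by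
  have hc1 : 0 < 1 / b - s := by
    have := le_abs_self s; linarith
  have hc2 : 0 < 1 / b + s := by
    have := neg_abs_le s; linarith
  have hEqIoi : ∀ x ∈ Ioi (0:ℝ), 1 / (2 * b) * Real.exp (-|x| / b) * Real.exp (s * x)
      = 1 / (2 * b) * Real.exp (-((1 / b - s) * x)) := by
    intro x hx
    rw [mul_assoc, ← Real.exp_add, abs_of_pos (by exact hx)]
    congr 1
    field_simp
    ring
  have hEqIic : ∀ x ∈ Iic (0:ℝ), 1 / (2 * b) * Real.exp (-|x| / b) * Real.exp (s * x)
      = 1 / (2 * b) * Real.exp ((1 / b + s) * x) := by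
    intro x hx
    rw [mul_assoc, ← Real.exp_add, abs_of_nonpos (by exact hx)]
    congr 1
    field_simp
  have hIoi : IntegrableOn
      (fun x => 1 / (2 * b) * Real.exp (-|x| / b) * Real.exp (s * x)) (Ioi (0:ℝ)) := by
    refine IntegrableOn.congr_fun ((exp_mul_integrableOn_Ioi hc1).const_mul (1 / (2 * b)))
      (fun x hx => ?_) measurableSet_Ioi
    exact (hEqIoi x hx).symm
  have hIic : IntegrableOn
      (fun x => 1 / (2 * b) * Real.exp (-|x| / b) * Real.exp (s * x)) (Iic (0:ℝ)) := by
    refine IntegrableOn.congr_fun ((exp_mul_integrableOn_Iic hc2).const_mul (1 / (2 * b)))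
      (fun x hx => ?_) measurableSet_Iic
    exact (hEqIic x hx).symm
  have := hIic.union hIoi
  rwa [Iic_union_Ioi, integrableOn_univ] at this

lemma lap_dens_integral {b s : ℝ} (hb : 0 < b) (hs : |s| < 1 / b) :
    ∫ x, 1 / (2 * b) * Real.exp (-|x| / b) * Real.exp (s * x) = 1 / (1 - s ^ 2 * b ^ 2) := by
  have hc1 : 0 < 1 / b - s := by
    have := le_abs_self s; linarith
  have hc2 : 0 < 1 / b + s := by
    have := neg_abs_le s; linarith
  have hsb : |s| * b < 1 := by
    rw [lt_div_iff₀ hb] at hs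
    linarith [hs]
  have hs2b2 : s ^ 2 * b ^ 2 < 1 := by
    have h0 : 0 ≤ |s| * b := mul_nonneg (abs_nonneg s) hb.le
    have : (|s| * b) ^ 2 < 1 := by nlinarith
    calc s ^ 2 * b ^ 2 = (|s| * b) ^ 2 := by rw [mul_pow, sq_abs]
    _ < 1 := this
  have hIoi : IntegrableOn
      (fun x => 1 / (2 * b) * Real.exp (-|x| / b) * Real.exp (s * x)) (Ioi (0:ℝ)) :=
    (lap_dens_integrable hb hs).integrableOn
  have hIic : IntegrableOn
      (fun x => 1 / (2 * b) * Real.exp (-|x| / b) * Real.exp (s * x)) (Iic (0:ℝ)) :=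
    (lap_dens_integrable hb hs).integrableOn
  have hunion : ∫ x, 1 / (2 * b) * Real.exp (-|x| / b) * Real.exp (s * x) =
      (∫ x in Iic (0:ℝ), 1 / (2 * b) * Real.exp (-|x| / b) * Real.exp (s * x)) +
      ∫ x in Ioi (0:ℝ), 1 / (2 * b) * Real.exp (-|x| / b) * Real.exp (s * x) := by
    rw [← setIntegral_union (Iic_disjoint_Ioi le_rfl) measurableSet_Ioi hIic hIoi,
      Iic_union_Ioi, Measure.restrict_univ]
  have hEqIoi : ∀ x ∈ Ioi (0:ℝ), 1 / (2 * b) * Real.exp (-|x| / b) * Real.exp (s * x)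
      = 1 / (2 * b) * Real.exp (-((1 / b - s) * x)) := by
    intro x hx
    rw [mul_assoc, ← Real.exp_add, abs_of_pos (by exact hx)]
    congr 1
    field_simp
    ring
  have hEqIic : ∀ x ∈ Iic (0:ℝ), 1 / (2 * b) * Real.exp (-|x| / b) * Real.exp (s * x)
      = 1 / (2 * b) * Real.exp ((1 / b + s) * x) := by
    intro x hx
    rw [mul_assoc, ← Real.exp_add, abs_of_nonpos (by exact hx)]
    congr 1
    field_simp
  have hIic_val : ∫ x in Iic (0:ℝ), 1 / (2 * b) * Real.exp (-|x| / b) * Real.exp (s * x)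
      = 1 / (2 * b) * (1 / b + s)⁻¹ := by
    rw [setIntegral_congr_fun measurableSet_Iic hEqIic, integral_const_mul,
      integral_exp_mul_Iic' hc2]
  have hIoi_val : ∫ x in Ioi (0:ℝ), 1 / (2 * b) * Real.exp (-|x| / b) * Real.exp (s * x)
      = 1 / (2 * b) * (1 / b - s)⁻¹ := by
    rw [setIntegral_congr_fun measurableSet_Ioi hEqIoi, integral_const_mul,
      integral_exp_mul_Ioi' hc1]
  rw [hunion, hIic_val, hIoi_val]
  have hb' : b ≠ 0 := hb.ne'
  have hp : 0 < 1 + s * b := by nlinarith [neg_abs_le s, abs_nonneg s]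
  have hm : 0 < 1 - s * b := by nlinarith [le_abs_self s]
  have hp' : 1 + s * b ≠ 0 := hp.ne'
  have hm' : 1 - s * b ≠ 0 := hm.ne'
  have h3 : 1 - s ^ 2 * b ^ 2 ≠ 0 := by nlinarith
  have e1 : 1 / b + s = (1 + s * b) / b := by field_simp
  have e2 : 1 / b - s = (1 - s * b) / b := by field_simp
  rw [e1, e2, inv_div, inv_div, eq_div_iff h3,
    show 1 - s ^ 2 * b ^ 2 = (1 + s * b) * (1 - s * b) by ring]
  field_simp
  rw [mul_comm b s]
  field_simp
  ring

lemma lap_integrable_exp {b s : ℝ} (hb : 0 < b) (hs : |s| < 1 / b) :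
    Integrable (fun x => Real.exp (s * x)) (lap b) := by
  have hd : ∀ x : ℝ, 0 ≤ 1 / (2 * b) * Real.exp (-|x| / b) := fun x =>
    mul_nonneg (by positivity) (Real.exp_pos _).le
  rw [lap, integrable_withDensity_iff]
  · refine (lap_dens_integrable hb hs).congr ?_
    filter_upwards with x
    rw [ENNReal.toReal_ofReal (hd x)]
    ring
  · exact (Measurable.const_mul ((measurable_abs.neg.div_const b).exp) _).ennreal_ofReal
  · filter_upwards with x using ENNReal.ofReal_lt_top

lemma lap_integral_exp {b s : ℝ} (hb : 0 < b) (hs : |s| < 1 / b) :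
    ∫ x, Real.exp (s * x) ∂(lap b) = 1 / (1 - s ^ 2 * b ^ 2) := by
  have hd : ∀ x : ℝ, 0 ≤ 1 / (2 * b) * Real.exp (-|x| / b) := fun x =>
    mul_nonneg (by positivity) (Real.exp_pos _).le
  have hlap : lap b = volume.withDensity
      (fun x => (((1 / (2 * b)) * Real.exp (-|x| / b)).toNNReal : ENNReal)) := rfl
  rw [hlap, integral_withDensity_eq_integral_smul
    (by exact (measurable_const.mul ((measurable_abs.neg.div_const b).exp)).real_toNNReal)]
  rw [← lap_dens_integral hb hs]
  congr 1
  funext x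
  rw [NNReal.smul_def, smul_eq_mul, Real.coe_toNNReal _ (hd x)]

end aux

/-- **High-probability bound for sums of i.i.d. Laplace random variables.** If `Z₁, …, Zₙ`
are i.i.d. `Lap(b)` random variables with sum `Z` and `γ ∈ (2/eⁿ, 1)`, then with
probability at least `1 - γ`, `|Z| < 2√2·b·√n·log(2/γ)`. -/
theorem laplace_sum_high_probability {Ω : Type*} [MeasurableSpace Ω]
    (μ : Measure Ω) [IsProbabilityMeasure μ] (n : ℕ) (b : ℝ) (hb : 0 < b)
    (Z : Fin n → Ω → ℝ) (hmeas : ∀ i, Measurable (Z i))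
    (hindep : iIndepFun Z μ)
    (hlaw : ∀ i, μ.map (Z i) = lap b)
    (γ : ℝ) (hγ0 : 2 / Real.exp n < γ) (hγ1 : γ < 1) :
    ENNReal.ofReal (1 - γ) ≤
      μ {ω | |∑ i, Z i ω| < 2 * Real.sqrt 2 * b * Real.sqrt n * Real.log (2 / γ)} := by
  have hγpos : 0 < γ := lt_trans (by positivity) hγ0
  have hn : 1 ≤ n := by
    by_contra h
    push_neg at h
    have hn0 : n = 0 := by omega
    subst hn0
    simp only [Nat.cast_zero, Real.exp_zero, div_one] at hγ0
    linarith
  have hnR : (1:ℝ) ≤ (n:ℝ) := by exact_mod_cast hn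
  have hnpos : (0:ℝ) < (n:ℝ) := by linarith
  set L := Real.log (2 / γ) with hL
  have h2γ : (1:ℝ) < 2 / γ := by
    rw [lt_div_iff₀ hγpos]; linarith
  have hLpos : 0 < L := Real.log_pos h2γ
  set t0 := 2 * Real.sqrt 2 * b * Real.sqrt n * L with ht0
  set lam := 1 / (b * Real.sqrt (2 * n)) with hlam
  have hsq2 : (0:ℝ) < Real.sqrt 2 := Real.sqrt_pos.mpr (by norm_num)
  have hsqn : (0:ℝ) < Real.sqrt n := Real.sqrt_pos.mpr hnpos
  have hsq2n : Real.sqrt (2 * n) = Real.sqrt 2 * Real.sqrt n := Real.sqrt_mul (by norm_num) n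
  have hsq2npos : (0:ℝ) < Real.sqrt (2 * n) := by rw [hsq2n]; positivity
  have hlampos : 0 < lam := by rw [hlam]; positivity
  have h1lt : (1:ℝ) < Real.sqrt (2 * n) := by
    have h2n : (1:ℝ) < 2 * n := by linarith
    calc (1:ℝ) = Real.sqrt 1 := Real.sqrt_one.symm
    _ < Real.sqrt (2 * n) := Real.sqrt_lt_sqrt (by norm_num) h2n
  have hlamabs : |lam| < 1 / b := by
    rw [abs_of_pos hlampos, hlam, div_lt_div_iff₀ (by positivity) hb]
    nlinarith
  have hlamnegabs : |(-lam)| < 1 / b := by rwa [abs_neg]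
  have hlam2b2 : lam ^ 2 * b ^ 2 = 1 / (2 * n) := by
    have : lam * b = 1 / Real.sqrt (2 * n) := by
      rw [hlam]; field_simp
    have hsq : Real.sqrt (2 * n) ^ 2 = 2 * n := Real.sq_sqrt (by positivity)
    calc lam ^ 2 * b ^ 2 = (lam * b) ^ 2 := by ring
    _ = (1 / Real.sqrt (2 * n)) ^ 2 := by rw [this]
    _ = 1 / (2 * n) := by rw [div_pow, one_pow, hsq]
  -- per-coordinate facts
  have hint : ∀ s : ℝ, |s| < 1 / b → ∀ i, Integrable (fun ω => Real.exp (s * Z i ω)) μ := by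
    intro s hs i
    have h2 := lap_integrable_exp hb hs
    rw [← hlaw i] at h2
    have := (integrable_map_measure
      (by exact (Real.continuous_exp.comp (continuous_const.mul continuous_id)).aestronglyMeasurable)
      (hmeas i).aemeasurable).mp h2
    exact this
  have hmgf_i : ∀ s : ℝ, |s| < 1 / b → ∀ i, mgf (Z i) μ s = 1 / (1 - s ^ 2 * b ^ 2) := by
    intro s hs i
    rw [mgf]
    have : ∫ ω, Real.exp (s * Z i ω) ∂μ = ∫ x, Real.exp (s * x) ∂(μ.map (Z i)) := by
      rw [integral_map (hmeas i).aemeasurable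
        (by exact (Real.continuous_exp.comp (continuous_const.mul continuous_id)).aestronglyMeasurable)]
    rw [this, hlaw i, lap_integral_exp hb hs]
  have hintsum : ∀ s : ℝ, |s| < 1 / b →
      Integrable (fun ω => Real.exp (s * (∑ i, Z i) ω)) μ := fun s hs =>
    hindep.integrable_exp_mul_sum hmeas (fun i _ => hint s hs i)
  have hmgfsum : ∀ s : ℝ, |s| < 1 / b →
      mgf (∑ i, Z i) μ s = (1 / (1 - s ^ 2 * b ^ 2)) ^ n := by
    intro s hs
    rw [hindep.mgf_sum hmeas]
    rw [Finset.prod_congr rfl (fun i _ => hmgf_i s hs i), Finset.prod_const,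
      Finset.card_univ, Fintype.card_fin]
  -- numerical bound on mgf value
  have hhalf : 1 / (2 * (n:ℝ)) ≤ 1 / 2 := by
    apply div_le_div_of_nonneg_left (by norm_num) (by norm_num)
    linarith
  have hhalfpos : 0 < 1 / (2 * (n:ℝ)) := by positivity
  have hbase : (0:ℝ) < 1 - 1 / (2 * n) := by linarith
  have hBern : (1:ℝ)/2 ≤ (1 - 1 / (2 * (n:ℝ))) ^ n := by
    have h := one_add_mul_le_pow (a := -(1 / (2 * (n:ℝ)))) (by linarith : (-2:ℝ) ≤ -(1 / (2 * (n:ℝ)))) n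
    have heq : 1 + (n:ℝ) * -(1 / (2 * (n:ℝ))) = 1/2 := by
      field_simp
      ring
    rw [heq] at h
    calc (1:ℝ)/2 ≤ (1 + -(1 / (2 * (n:ℝ)))) ^ n := h
    _ = (1 - 1 / (2 * (n:ℝ))) ^ n := by ring_nf
  have hqn : (1 / (1 - 1 / (2 * (n:ℝ)))) ^ n ≤ 2 := by
    rw [div_pow, one_pow]
    rw [div_le_iff₀ (by positivity)]
    nlinarith [hBern]
  -- exp(-lam * t0) = γ²/4
  have hexpL : Real.exp (-L) = γ / 2 := by
    rw [Real.exp_neg, hL, Real.exp_log (by positivity), inv_div]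
  have hlamt : lam * t0 = 2 * L := by
    rw [hlam, ht0, hsq2n]
    field_simp
  have hexp2 : Real.exp (-lam * t0) = γ ^ 2 / 4 := by
    rw [neg_mul, hlamt, show -(2 * L) = -L + -L by ring, Real.exp_add, hexpL]
    ring
  -- Chernoff, upper tail
  have hup : (μ {ω | t0 ≤ (∑ i, Z i) ω}).toReal ≤ γ ^ 2 / 2 := by
    have h := measure_ge_le_exp_mul_mgf (μ := μ) (X := ∑ i, Z i) t0 hlampos.le
      (hintsum lam hlamabs)
    rw [hmgfsum lam hlamabs, hlam2b2, hexp2] at h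
    refine h.trans ?_
    have hc : (0:ℝ) ≤ γ ^ 2 / 4 := by positivity
    have hmul := mul_le_mul_of_nonneg_left hqn hc
    linarith
  -- Chernoff, lower tail
  have hdown : (μ {ω | (∑ i, Z i) ω ≤ -t0}).toReal ≤ γ ^ 2 / 2 := by
    have h := measure_le_le_exp_mul_mgf (μ := μ) (X := ∑ i, Z i) (-t0)
      (by linarith : -lam ≤ 0) (hintsum (-lam) hlamnegabs)
    rw [hmgfsum (-lam) hlamnegabs, neg_pow, show ((-1:ℝ))^2 = 1 by norm_num] at h
    rw [show -(-lam) * -t0 = -lam * t0 by ring, hexp2] at h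
    rw [show (1:ℝ) * lam ^ 2 = lam ^ 2 by ring, hlam2b2] at h
    refine h.trans ?_
    have hc : (0:ℝ) ≤ γ ^ 2 / 4 := by positivity
    have hmul := mul_le_mul_of_nonneg_left hqn hc
    linarith
  -- assemble
  set E := {ω | |∑ i, Z i ω| < t0} with hE
  have hmeasS : Measurable (fun ω => ∑ i, Z i ω) := by
    exact Finset.measurable_sum Finset.univ (fun i _ => hmeas i)
  have hEmeas : MeasurableSet E := measurableSet_lt hmeasS.abs measurable_const
  have hsub : Eᶜ ⊆ {ω | t0 ≤ (∑ i, Z i) ω} ∪ {ω | (∑ i, Z i) ω ≤ -t0} := by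
    intro ω hω
    simp only [hE, Set.mem_compl_iff, Set.mem_setOf_eq, not_lt] at hω
    rcases le_abs.mp hω with h | h
    · left; simpa [Finset.sum_apply] using h
    · right
      simp only [Set.mem_setOf_eq, Finset.sum_apply]
      linarith [h]
  have hA' : μ {ω | t0 ≤ (∑ i, Z i) ω} ≤ ENNReal.ofReal (γ ^ 2 / 2) :=
    (ENNReal.le_ofReal_iff_toReal_le (measure_ne_top μ _) (by positivity)).mpr hup
  have hB' : μ {ω | (∑ i, Z i) ω ≤ -t0} ≤ ENNReal.ofReal (γ ^ 2 / 2) :=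
    (ENNReal.le_ofReal_iff_toReal_le (measure_ne_top μ _) (by positivity)).mpr hdown
  have hEc : μ Eᶜ ≤ ENNReal.ofReal γ := by
    calc μ Eᶜ ≤ μ ({ω | t0 ≤ (∑ i, Z i) ω} ∪ {ω | (∑ i, Z i) ω ≤ -t0}) := measure_mono hsub
    _ ≤ μ {ω | t0 ≤ (∑ i, Z i) ω} + μ {ω | (∑ i, Z i) ω ≤ -t0} := measure_union_le _ _
    _ ≤ ENNReal.ofReal (γ ^ 2 / 2) + ENNReal.ofReal (γ ^ 2 / 2) := add_le_add hA' hB'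
    _ = ENNReal.ofReal (γ ^ 2 / 2 + γ ^ 2 / 2) := (ENNReal.ofReal_add (by positivity) (by positivity)).symm
    _ ≤ ENNReal.ofReal γ := ENNReal.ofReal_le_ofReal (by nlinarith)
  have hEeq : μ E = 1 - μ Eᶜ := by
    have := prob_compl_eq_one_sub (μ := μ) hEmeas.compl
    rwa [compl_compl] at this
  calc ENNReal.ofReal (1 - γ) = 1 - ENNReal.ofReal γ := by
        rw [← ENNReal.ofReal_one, ← ENNReal.ofReal_sub _ hγpos.le]
  _ ≤ 1 - μ Eᶜ := tsub_le_tsub_left hEc 1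
  _ = μ E := hEeq.symm
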